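/- For all real numbers r₁, r₂ > 0, the annulus algebra A_{r₁,r₂} over K is e^{−(r₁+r₂)}-rigid. -/

import Mathlib

/-- A `c`-close product on a commutative nonarchimedean Banach algebra `A` over `K`. -/
def IsCCloseProduct {K : Type*} [NormedField K] {A : Type*} [NormedCommRing A]
    [NormedAlgebra K A] (c : ℝ) (m : A →L[K] A →L[K] A) : Prop :=
  (∀ x y : A, m x y = m y x) ∧
  (∀ x y z : A, m (m x y) z = m x (m y z)) ∧
  (∀ x y : A, x * y ≠ 0 → ‖m x y - x * y‖ < c * ‖x * y‖) ∧
  (∀ x y : A, x * y = 0 → m x y = 0)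

/-- `A` is `c`-rigid if every `c`-close product `∗` on `A` is intertwined with the
original product by a `K`-linear bijective isometry `φ` with `‖φ x − x‖ ≤ c·‖x‖`. -/
def IsCRigid (K : Type*) [NormedField K] (A : Type*) [NormedCommRing A]
    [NormedAlgebra K A] (c : ℝ) : Prop :=
  ∀ m : A →L[K] A →L[K] A, IsCCloseProduct c m →
    ∃ φ : A →ₗ[K] A, Function.Bijective φ ∧ (∀ x : A, ‖φ x‖ = ‖x‖) ∧
      (∀ x y : A, φ (x * y) = m (φ x) (φ y)) ∧ ∀ x : A, ‖φ x - x‖ ≤ c * ‖x‖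

section StarPow
variable {K : Type*} [NormedField K] {A : Type*} [NormedCommRing A] [NormedAlgebra K A]

/-- iterated `m`-multiplication by `b`, starting from `u`. -/
noncomputable def starPow (m : A →L[K] A →L[K] A) (b u : A) : ℕ → A
  | 0 => u
  | n + 1 => m b (starPow m b u n)

/-- `m`-th integer power family. -/
noncomputable def starZPow (m : A →L[K] A →L[K] A) (b b' u : A) (n : ℤ) : A :=
  if 0 ≤ n then starPow m b u n.toNat else starPow m b' u (-n).toNat

variable {m : A →L[K] A →L[K] A} {b b' u : A}

lemma starZPow_zero : starZPow m b b' u 0 = u := by simp [starZPow, starPow]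

lemma starZPow_neg (n : ℤ) : starZPow m b' b u n = starZPow m b b' u (-n) := by
  rcases lt_trichotomy n 0 with h | rfl | h
  · rw [starZPow, starZPow, if_neg (by omega), if_pos (by omega)]
  · simp [starZPow, starPow]
  · rw [starZPow, starZPow, if_pos (by omega), if_neg (by omega)]
    simp

section
variable (hcomm : ∀ a b : A, m a b = m b a)
  (hassoc : ∀ a b c : A, m (m a b) c = m a (m b c))
  (hu : ∀ a : A, m u a = a) (hbb' : m b b' = u)
include hcomm hassoc hu hbb'

lemma starZPow_cancel (a : A) : m b (m b' a) = a := by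
  rw [← hassoc, hbb', hu]

lemma starZPow_add_one (n : ℤ) :
    starZPow m b b' u (n + 1) = m b (starZPow m b b' u n) := by
  rcases lt_trichotomy n 0 with h | rfl | h
  · rcases eq_or_lt_of_le (by omega : n + 1 ≤ 0) with h1 | h1
    · -- n = -1
      have hn : n = -1 := by omega
      subst hn
      rw [starZPow, starZPow, if_pos (by omega), if_neg (by omega)]
      show u = m b (starPow m b' u 1)
      show u = m b (m b' (starPow m b' u 0))
      rw [starZPow_cancel hcomm hassoc hu hbb']
      rfl
    · rw [starZPow, starZPow, if_neg (by omega), if_neg (by omega)]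
      have h2 : (-n).toNat = (-(n+1)).toNat + 1 := by omega
      rw [h2]
      show starPow m b' u (-(n+1)).toNat = m b (m b' (starPow m b' u (-(n+1)).toNat))
      rw [starZPow_cancel hcomm hassoc hu hbb']
  · simp [starZPow, starPow]
  · rw [starZPow, starZPow, if_pos (by omega), if_pos (by omega)]
    have h2 : (n + 1).toNat = n.toNat + 1 := by omega
    rw [h2]
    rfl

lemma starZPow_sub_one (n : ℤ) :
    starZPow m b b' u (n - 1) = m b' (starZPow m b b' u n) := by
  have hb'b : m b' b = u := by rw [hcomm]; exact hbb'
  have h1 := starZPow_add_one (m := m) (b := b') (b' := b) (u := u) hcomm hassoc hu hb'b (-n)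
  rw [starZPow_neg (m := m) (b := b) (b' := b') (u := u)] at h1
  have h2 : -(-n + 1) = n - 1 := by ring
  rw [h2, starZPow_neg (m := m) (b := b) (b' := b') (u := u) (-n), neg_neg] at h1
  exact h1

lemma starZPow_add (s t : ℤ) :
    starZPow m b b' u (s + t) = m (starZPow m b b' u s) (starZPow m b b' u t) := by
  induction s using Int.induction_on with
  | zero => rw [zero_add, starZPow_zero, hu]
  | succ k ih =>
      have h1 : (k : ℤ) + 1 + t = ((k : ℤ) + t) + 1 := by ring
      rw [h1, starZPow_add_one hcomm hassoc hu hbb', ih,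
        starZPow_add_one hcomm hassoc hu hbb', hassoc]
  | pred k ih =>
      have h1 : (-(k : ℤ) - 1) + t = ((-(k : ℤ)) + t) - 1 := by ring
      rw [h1, starZPow_sub_one hcomm hassoc hu hbb', ih,
        starZPow_sub_one hcomm hassoc hu hbb', hassoc]

end
end StarPow

section Helper

lemma ultra_norm_eq_of_sub_lt {E : Type*} [SeminormedAddCommGroup E] [IsUltrametricDist E]
    {p q : E} (h : ‖p - q‖ < ‖q‖) : ‖p‖ = ‖q‖ := by
  have h1 : ‖p‖ ≤ ‖q‖ := by
    calc ‖p‖ = ‖(p - q) + q‖ := by rw [sub_add_cancel]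
    _ ≤ max ‖p - q‖ ‖q‖ := IsUltrametricDist.norm_add_le_max _ _
    _ ≤ ‖q‖ := max_le h.le le_rfl
  refine le_antisymm h1 ?_
  by_contra hlt
  push_neg at hlt
  have h2 : ‖q‖ ≤ max ‖p‖ ‖p - q‖ := by
    calc ‖q‖ = ‖p + -(p - q)‖ := by rw [← sub_eq_add_neg, sub_sub_cancel]
    _ ≤ max ‖p‖ ‖-(p - q)‖ := IsUltrametricDist.norm_add_le_max _ _
    _ = max ‖p‖ ‖p - q‖ := by rw [norm_neg]
  rcases max_cases ‖p‖ ‖p - q‖ with ⟨he, _⟩ | ⟨he, _⟩ <;> rw [he] at h2 <;> linarith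

lemma ultra_norm_sub_le_max {E : Type*} [SeminormedAddCommGroup E] [IsUltrametricDist E]
    (p q : E) : ‖p - q‖ ≤ max ‖p‖ ‖q‖ := by
  calc ‖p - q‖ = ‖p + -q‖ := by rw [sub_eq_add_neg]
  _ ≤ max ‖p‖ ‖-q‖ := IsUltrametricDist.norm_add_le_max _ _
  _ = max ‖p‖ ‖q‖ := by rw [norm_neg]

end Helper



set_option maxHeartbeats 2000000 in
/-- rigidity of the annulus algebra. For all `r₁, r₂ > 0`, the algebra
`A_{r₁,r₂}` of analytic functions on the annulus `{e^{−r₂} ≤ |x| ≤ e^{r₁}}` is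
`e^{−(r₁+r₂)}`-rigid. The annulus algebra is characterized (up to isometric isomorphism
of Banach algebras) as a commutative nonarchimedean Banach algebra `A` over `K` with an
invertible element `x` such that every `e ∈ A` has a unique convergent Laurent expansion
`e = Σ_{n∈ℤ} aₙ • xⁿ` and `‖e‖ = sup_n ‖aₙ‖·max(e^{n r₁}, e^{−n r₂})`. -/
theorem annulusAlgebra_isCRigid
    {K : Type*} [NormedField K] [IsUltrametricDist K] [CompleteSpace K]
    {A : Type*} [NormedCommRing A] [NormedAlgebra K A] [CompleteSpace A]
    [IsUltrametricDist A]
    (r₁ r₂ : ℝ) (hr₁ : 0 < r₁) (hr₂ : 0 < r₂)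
    (x : Aˣ)
    (hexp : ∀ e : A, ∃! a : ℤ → K,
      HasSum (fun n : ℤ => a n • ((x ^ n : Aˣ) : A)) e)
    (hnorm : ∀ (e : A) (a : ℤ → K),
      HasSum (fun n : ℤ => a n • ((x ^ n : Aˣ) : A)) e →
      IsLUB (Set.range fun n : ℤ =>
        ‖a n‖ * max (Real.exp ((n : ℝ) * r₁)) (Real.exp (-(n : ℝ) * r₂))) ‖e‖) :
    IsCRigid K A (Real.exp (-(r₁ + r₂))) := by
  
  classical
  intro m hm
  obtain ⟨hcomm, hassoc, hclose, hzero⟩ := hm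
  set c : ℝ := Real.exp (-(r₁ + r₂)) with hcdef
  have hc0 : 0 < c := Real.exp_pos _
  have hc1 : c < 1 := by
    rw [hcdef, Real.exp_lt_one_iff]
    linarith
  set ρ : ℤ → ℝ := fun n => max (Real.exp ((n : ℝ) * r₁)) (Real.exp (-(n : ℝ) * r₂)) with hρdef
  have hρpos : ∀ n : ℤ, 0 < ρ n := fun n => lt_max_of_lt_left (Real.exp_pos _)
  have hρ_of_nonneg : ∀ n : ℤ, 0 ≤ n → ρ n = Real.exp ((n : ℝ) * r₁) := by
    intro n hn
    have hn' : (0:ℝ) ≤ (n:ℝ) := by exact_mod_cast hn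
    exact max_eq_left (Real.exp_le_exp.mpr (by nlinarith))
  have hρ_of_nonpos : ∀ n : ℤ, n ≤ 0 → ρ n = Real.exp (-(n : ℝ) * r₂) := by
    intro n hn
    have hn' : (n:ℝ) ≤ 0 := by exact_mod_cast hn
    exact max_eq_right (Real.exp_le_exp.mpr (by nlinarith))
  have hρ0 : ρ 0 = 1 := by simp [hρdef]
  have hρ_succ : ∀ n : ℤ, 0 ≤ n → ρ (n + 1) = Real.exp r₁ * ρ n := by
    intro n hn
    rw [hρ_of_nonneg (n+1) (by omega), hρ_of_nonneg n hn, ← Real.exp_add]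
    congr 1
    push_cast
    ring
  have hρ_pred : ∀ n : ℤ, n ≤ 0 → ρ (n - 1) = Real.exp r₂ * ρ n := by
    intro n hn
    rw [hρ_of_nonpos (n-1) (by omega), hρ_of_nonpos n hn, ← Real.exp_add]
    congr 1
    push_cast
    ring
  have hδ : ∀ n : ℤ, HasSum (fun k : ℤ => (if k = n then (1:K) else 0) • ((x ^ k : Aˣ) : A))
      ((x ^ n : Aˣ) : A) := by
    intro n
    have hfun : (fun k : ℤ => (if k = n then (1:K) else 0) • ((x ^ k : Aˣ) : A))
        = fun k : ℤ => if k = n then ((x ^ n : Aˣ) : A) else 0 := by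
      funext k
      by_cases h : k = n
      · subst h; simp
      · simp [h]
    rw [hfun]
    exact hasSum_ite_eq n _
  have hxn : ∀ n : ℤ, ‖((x ^ n : Aˣ) : A)‖ = ρ n := by
    intro n
    have hlub := hnorm _ _ (hδ n)
    have hfun : (fun k : ℤ => ‖if k = n then (1:K) else 0‖
          * max (Real.exp ((k:ℝ) * r₁)) (Real.exp (-(k:ℝ) * r₂)))
        = fun k : ℤ => if k = n then ρ n else 0 := by
      funext k
      by_cases h : k = n
      · subst h; simp [hρdef]
      · simp [h]
    rw [hfun] at hlub
    refine hlub.unique ⟨?_, ?_⟩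
    · rintro v ⟨k, rfl⟩
      dsimp only
      split
      · exact le_rfl
      · exact (hρpos n).le
    · intro v hv
      have h2 : (if n = n then ρ n else 0) ≤ v := hv ⟨n, rfl⟩
      simpa using h2
  have key : ∀ p q : A, ‖p - q‖ < ‖q‖ → ‖p‖ = ‖q‖ := fun p q h => ultra_norm_eq_of_sub_lt h
  have h1A : ‖(1 : A)‖ = 1 := by
    have h := hxn 0
    rw [hρ0] at h
    simpa using h
  have hmle : ∀ p q : A, ‖m p q - p * q‖ ≤ c * ‖p * q‖ := by
    intro p q
    by_cases h : p * q = 0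
    · rw [hzero p q h, h]; simp
    · exact (hclose p q h).le
  have hmnorm : ∀ p q : A, ‖m p q‖ = ‖p * q‖ := by
    intro p q
    by_cases h : p * q = 0
    · rw [hzero p q h, h]
    · refine key _ _ (lt_of_lt_of_le (hclose p q h) ?_)
      nlinarith [norm_pos_iff.mpr h, hc1]
  -- construction of the unit for m
  have hopnorm : ∀ e : A, ‖e - m 1 e‖ ≤ c * ‖e‖ := by
    intro e
    by_cases he : e = 0
    · simp [he]
    · have h := hclose 1 e (by simpa using he)
      rw [one_mul] at h
      rw [norm_sub_rev]
      exact h.le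
  have inv_lemma : ∀ F : A →L[K] A, (∀ e, ‖e - F e‖ ≤ c * ‖e‖) → ∀ b : A, ∃ e, F e = b := by
    intro F hF b
    set G : A →L[K] A := 1 - F with hGdef
    have hGapp : ∀ e, G e = e - F e := fun e => rfl
    have hGnorm : ∀ e, ‖G e‖ ≤ c * ‖e‖ := fun e => hF e
    have hGk : ∀ (k : ℕ) (e : A), ‖(G ^ k) e‖ ≤ c ^ k * ‖e‖ := by
      intro k
      induction k with
      | zero => intro e; simp
      | succ k ih =>
          intro e
          have h1 : (G ^ (k+1)) e = (G ^ k) (G e) := by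
            rw [pow_succ, ContinuousLinearMap.mul_apply]
          rw [h1]
          calc ‖(G ^ k) (G e)‖ ≤ c ^ k * ‖G e‖ := ih (G e)
          _ ≤ c ^ k * (c * ‖e‖) := by
              exact mul_le_mul_of_nonneg_left (hGnorm e) (by positivity)
          _ = c ^ (k+1) * ‖e‖ := by ring
    have hsum : Summable (fun k : ℕ => (G ^ k) b) := by
      apply NonarchimedeanAddGroup.summable_of_tendsto_cofinite_zero
      rw [Nat.cofinite_eq_atTop, tendsto_zero_iff_norm_tendsto_zero]
      refine squeeze_zero (fun k => norm_nonneg _) (fun k => hGk k b) ?_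
      have h2 := (tendsto_pow_atTop_nhds_zero_of_lt_one hc0.le hc1).mul_const ‖b‖
      simpa using h2
    refine ⟨∑' k, (G ^ k) b, ?_⟩
    have h1 : F (∑' k, (G ^ k) b) = (∑' k, (G ^ k) b) - G (∑' k, (G ^ k) b) := by
      rw [hGapp]
      ring
    have h2 : G (∑' k, (G ^ k) b) = ∑' k, (G ^ (k+1)) b := by
      rw [G.map_tsum hsum]
      refine tsum_congr fun k => ?_
      rw [pow_succ', ContinuousLinearMap.mul_apply]
    have h3 : ∑' k, (G ^ k) b = (G ^ 0) b + ∑' k, (G ^ (k+1)) b := hsum.tsum_eq_zero_add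
    rw [h1, h2, h3, pow_zero, ContinuousLinearMap.one_apply]
    ring
  have hm1inj : ∀ p q : A, m 1 p = m 1 q → p = q := by
    intro p q h
    have h4 : m 1 (p - q) = 0 := by rw [map_sub, h, sub_self]
    have h5 := hopnorm (p - q)
    rw [h4, sub_zero] at h5
    have h6 : ‖p - q‖ = 0 := by nlinarith [norm_nonneg (p - q)]
    have h7 : p - q = 0 := norm_eq_zero.mp h6
    linear_combination h7
  obtain ⟨u, hm1u⟩ := inv_lemma (m 1) hopnorm 1
  have hu : ∀ e : A, m u e = e := by
    intro e
    have h2 : m 1 (m u e) = m 1 e := by rw [← hassoc, hm1u]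
    exact hm1inj _ _ h2
  have hunorm1 : ‖u - 1‖ ≤ c * ‖u‖ := by
    have h := hopnorm u
    rwa [hm1u] at h
  have hule1 : ‖u‖ ≤ 1 := by
    by_contra hgt
    push_neg at hgt
    have h2 : ‖u‖ ≤ max ‖u - 1‖ ‖(1:A)‖ := by
      calc ‖u‖ = ‖(u - 1) + 1‖ := by rw [sub_add_cancel]
      _ ≤ _ := IsUltrametricDist.norm_add_le_max _ _
    rw [h1A] at h2
    rcases le_total ‖u - 1‖ 1 with h3 | h3
    · rw [max_eq_right h3] at h2; linarith
    · rw [max_eq_left h3] at h2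
      nlinarith
  have hunorm : ‖u - 1‖ ≤ c := hunorm1.trans (by nlinarith)
  have hueq1 : ‖u‖ = 1 := by
    rw [← h1A]
    exact key u 1 (by rw [h1A]; exact lt_of_le_of_lt hunorm hc1)
  -- the m-inverse of x
  set y : A := ((x⁻¹ : Aˣ) : A) with hydef
  have hxy1 : (x : A) * y = 1 := Units.mul_inv x
  have hynorm : ‖y‖ = Real.exp r₂ := by
    have h := hxn (-1)
    rw [hρ_of_nonpos (-1) (by omega)] at h
    rw [hydef, ← zpow_neg_one]
    simpa using h
  have hxnorm : ‖(x : A)‖ = Real.exp r₁ := by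
    have h := hxn 1
    rw [hρ_of_nonneg 1 (by omega)] at h
    rw [show ((x : A)) = ((x ^ (1:ℤ) : Aˣ) : A) by rw [zpow_one]]
    simpa using h
  set t' : A := u - m (x : A) y with ht'def
  have ht'norm : ‖t'‖ ≤ c := by
    have h2 : ‖m (x:A) y - 1‖ ≤ c := by
      have h := hmle (x:A) y
      rwa [hxy1, h1A, mul_one] at h
    have h3 : t' = (u - 1) - (m (x:A) y - 1) := by rw [ht'def]; ring
    rw [h3]
    exact le_trans (ultra_norm_sub_le_max _ _) (max_le hunorm h2)
  set S : ℕ → A := starPow m t' u with hSdef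
  have hS0 : S 0 = u := rfl
  have hSsucc : ∀ k, S (k+1) = m t' (S k) := fun k => rfl
  have hSnorm : ∀ k, ‖S k‖ ≤ c ^ k := by
    intro k
    induction k with
    | zero => rw [hS0, hueq1]; simp
    | succ k ih =>
        rw [hSsucc, hmnorm]
        calc ‖t' * S k‖ ≤ ‖t'‖ * ‖S k‖ := norm_mul_le _ _
        _ ≤ c * c ^ k := mul_le_mul ht'norm ih (norm_nonneg _) hc0.le
        _ = c ^ (k+1) := by ring
  have hSsum : Summable S := by
    apply NonarchimedeanAddGroup.summable_of_tendsto_cofinite_zero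
    rw [Nat.cofinite_eq_atTop, tendsto_zero_iff_norm_tendsto_zero]
    exact squeeze_zero (fun k => norm_nonneg _) hSnorm
      (tendsto_pow_atTop_nhds_zero_of_lt_one hc0.le hc1)
  set v : A := ∑' k, S k with hvdef
  have hvrec : v - u = m t' v := by
    have h0 : ∑' k, S k = S 0 + ∑' k, S (k + 1) := hSsum.tsum_eq_zero_add
    have h1 : ∑' k, S (k + 1) = m t' v := by
      calc ∑' k, S (k + 1) = ∑' k, m t' (S k) := tsum_congr hSsucc
      _ = m t' v := ((m t').map_tsum hSsum).symm
    have h4 : v = u + m t' v := by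
      conv_lhs => rw [hvdef, h0, hS0, h1]
    linear_combination h4
  have hvsub : ‖v - u‖ ≤ c * ‖v‖ := by
    rw [hvrec, hmnorm]
    calc ‖t' * v‖ ≤ ‖t'‖ * ‖v‖ := norm_mul_le _ _
    _ ≤ c * ‖v‖ := mul_le_mul_of_nonneg_right ht'norm (norm_nonneg _)
  have hvle1 : ‖v‖ ≤ 1 := by
    by_contra hgt
    push_neg at hgt
    have h2 : ‖v‖ ≤ max ‖v - u‖ ‖u‖ := by
      calc ‖v‖ = ‖(v - u) + u‖ := by rw [sub_add_cancel]
      _ ≤ _ := IsUltrametricDist.norm_add_le_max _ _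
    rw [hueq1] at h2
    rcases le_total ‖v - u‖ 1 with h3 | h3
    · rw [max_eq_right h3] at h2; linarith
    · rw [max_eq_left h3] at h2; nlinarith
  have hvu : ‖v - u‖ ≤ c := by
    nlinarith [hvsub, norm_nonneg (v - u)]
  have hmxyv : m (m (x:A) y) v = u := by
    have h1 : m (x:A) y = u - t' := by rw [ht'def]; ring
    rw [h1, map_sub, ContinuousLinearMap.sub_apply, hu v, ← hvrec]
    ring
  set x' : A := m y v with hx'def
  have hxx' : m (x:A) x' = u := by
    rw [hx'def, ← hassoc]
    exact hmxyv
  have hyu : m y u = y := by rw [hcomm]; exact hu y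
  have hx'y : ‖x' - y‖ ≤ c * Real.exp r₂ := by
    have h1 : x' - y = m y (v - u) := by
      rw [map_sub, hyu, hx'def]
    rw [h1, hmnorm]
    calc ‖y * (v - u)‖ ≤ ‖y‖ * ‖v - u‖ := norm_mul_le _ _
    _ ≤ Real.exp r₂ * c := by
        rw [hynorm]
        exact mul_le_mul_of_nonneg_left hvu (Real.exp_pos r₂).le
    _ = c * Real.exp r₂ := by ring
  have hx'norm : ‖x'‖ = Real.exp r₂ := by
    rw [← hynorm]
    refine key x' y ?_
    rw [hynorm]
    exact lt_of_le_of_lt hx'y (by nlinarith [Real.exp_pos r₂])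
  -- star powers of x
  set w : ℤ → A := starZPow m (x : A) x' u with hwdef
  have hw0 : w 0 = u := starZPow_zero
  have hwsucc : ∀ n : ℤ, w (n + 1) = m (x:A) (w n) :=
    fun n => starZPow_add_one hcomm hassoc hu hxx' n
  have hwpred : ∀ n : ℤ, w (n - 1) = m x' (w n) :=
    fun n => starZPow_sub_one hcomm hassoc hu hxx' n
  have hwadd : ∀ s t : ℤ, w (s + t) = m (w s) (w t) :=
    fun s t => starZPow_add hcomm hassoc hu hxx' s t
  have hzsucc : ∀ n : ℤ, ((x ^ (n+1) : Aˣ) : A) = (x : A) * ((x ^ n : Aˣ) : A) := by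
    intro n
    rw [zpow_add_one, Units.val_mul, mul_comm]
  have hzpred : ∀ n : ℤ, ((x ^ (n-1) : Aˣ) : A) = y * ((x ^ n : Aˣ) : A) := by
    intro n
    rw [zpow_sub_one, Units.val_mul, mul_comm, hydef]
  have hwest : ∀ n : ℤ, ‖w n - ((x ^ n : Aˣ) : A)‖ ≤ c * ρ n := by
    intro n
    induction n using Int.induction_on with
    | zero =>
        rw [hw0, hρ0, mul_one]
        simpa using hunorm
    | succ k ih =>
        have hk0 : (0:ℤ) ≤ (k:ℤ) := Int.ofNat_nonneg k
        have hwk : ‖w (k:ℤ)‖ ≤ ρ (k:ℤ) := by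
          have h2 := hxn (k:ℤ)
          calc ‖w (k:ℤ)‖ = ‖(w (k:ℤ) - ((x ^ (k:ℤ) : Aˣ) : A)) + ((x ^ (k:ℤ) : Aˣ) : A)‖ := by
                rw [sub_add_cancel]
          _ ≤ max ‖w (k:ℤ) - ((x ^ (k:ℤ) : Aˣ) : A)‖ ‖((x ^ (k:ℤ) : Aˣ) : A)‖ :=
              IsUltrametricDist.norm_add_le_max _ _
          _ ≤ ρ (k:ℤ) := by
              rw [h2]
              exact max_le (le_trans ih (by nlinarith [hρpos (k:ℤ)])) le_rfl
        have hsplit : w ((k:ℤ) + 1) - ((x ^ ((k:ℤ)+1) : Aˣ) : A)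
            = (m (x:A) (w (k:ℤ)) - (x:A) * w (k:ℤ))
              + ((x:A) * (w (k:ℤ) - ((x ^ ((k:ℤ)) : Aˣ) : A))) := by
          rw [hwsucc, hzsucc]
          ring
        rw [hsplit]
        refine le_trans (IsUltrametricDist.norm_add_le_max _ _) (max_le ?_ ?_)
        · calc ‖m (x:A) (w (k:ℤ)) - (x:A) * w (k:ℤ)‖ ≤ c * ‖(x:A) * w (k:ℤ)‖ := hmle _ _
          _ ≤ c * (‖(x:A)‖ * ‖w (k:ℤ)‖) :=
              mul_le_mul_of_nonneg_left (norm_mul_le _ _) hc0.le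
          _ ≤ c * (Real.exp r₁ * ρ (k:ℤ)) := by
              rw [hxnorm]
              exact mul_le_mul_of_nonneg_left
                (mul_le_mul_of_nonneg_left hwk (Real.exp_pos r₁).le) hc0.le
          _ = c * ρ ((k:ℤ)+1) := by rw [hρ_succ _ hk0]
        · calc ‖(x:A) * (w (k:ℤ) - ((x ^ ((k:ℤ)) : Aˣ) : A))‖
              ≤ ‖(x:A)‖ * ‖w (k:ℤ) - ((x ^ ((k:ℤ)) : Aˣ) : A)‖ := norm_mul_le _ _
          _ ≤ Real.exp r₁ * (c * ρ (k:ℤ)) := by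
              rw [hxnorm]
              exact mul_le_mul_of_nonneg_left ih (Real.exp_pos r₁).le
          _ = c * ρ ((k:ℤ)+1) := by rw [hρ_succ _ hk0]; ring
    | pred k ih =>
        have hk0 : (-(k:ℤ)) ≤ 0 := by omega
        have hwk : ‖w (-(k:ℤ))‖ ≤ ρ (-(k:ℤ)) := by
          have h2 := hxn (-(k:ℤ))
          calc ‖w (-(k:ℤ))‖
              = ‖(w (-(k:ℤ)) - ((x ^ (-(k:ℤ)) : Aˣ) : A)) + ((x ^ (-(k:ℤ)) : Aˣ) : A)‖ := by
                rw [sub_add_cancel]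
          _ ≤ max ‖w (-(k:ℤ)) - ((x ^ (-(k:ℤ)) : Aˣ) : A)‖ ‖((x ^ (-(k:ℤ)) : Aˣ) : A)‖ :=
              IsUltrametricDist.norm_add_le_max _ _
          _ ≤ ρ (-(k:ℤ)) := by
              rw [h2]
              exact max_le (le_trans ih (by nlinarith [hρpos (-(k:ℤ))])) le_rfl
        have hsplit : w (-(k:ℤ) - 1) - ((x ^ (-(k:ℤ)-1) : Aˣ) : A)
            = (m x' (w (-(k:ℤ))) - x' * w (-(k:ℤ)))
              + (((x' - y) * w (-(k:ℤ)))
              + (y * (w (-(k:ℤ)) - ((x ^ (-(k:ℤ)) : Aˣ) : A)))) := by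
          rw [hwpred, hzpred]
          ring
        have hρ1 : ρ (-(k:ℤ) - 1) = Real.exp r₂ * ρ (-(k:ℤ)) := hρ_pred _ hk0
        rw [hsplit]
        refine le_trans (IsUltrametricDist.norm_add_le_max _ _) (max_le ?_
          (le_trans (IsUltrametricDist.norm_add_le_max _ _) (max_le ?_ ?_)))
        · calc ‖m x' (w (-(k:ℤ))) - x' * w (-(k:ℤ))‖ ≤ c * ‖x' * w (-(k:ℤ))‖ := hmle _ _
          _ ≤ c * (‖x'‖ * ‖w (-(k:ℤ))‖) :=
              mul_le_mul_of_nonneg_left (norm_mul_le _ _) hc0.le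
          _ ≤ c * (Real.exp r₂ * ρ (-(k:ℤ))) := by
              rw [hx'norm]
              exact mul_le_mul_of_nonneg_left
                (mul_le_mul_of_nonneg_left hwk (Real.exp_pos r₂).le) hc0.le
          _ = c * ρ (-(k:ℤ)-1) := by rw [hρ1]
        · calc ‖(x' - y) * w (-(k:ℤ))‖ ≤ ‖x' - y‖ * ‖w (-(k:ℤ))‖ := norm_mul_le _ _
          _ ≤ (c * Real.exp r₂) * ρ (-(k:ℤ)) := by
              have := mul_le_mul hx'y hwk (norm_nonneg _) (by positivity)
              exact this
          _ = c * ρ (-(k:ℤ)-1) := by rw [hρ1]; ring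
        · calc ‖y * (w (-(k:ℤ)) - ((x ^ (-(k:ℤ)) : Aˣ) : A))‖
              ≤ ‖y‖ * ‖w (-(k:ℤ)) - ((x ^ (-(k:ℤ)) : Aˣ) : A)‖ := norm_mul_le _ _
          _ ≤ Real.exp r₂ * (c * ρ (-(k:ℤ))) := by
              rw [hynorm]
              exact mul_le_mul_of_nonneg_left ih (Real.exp_pos r₂).le
          _ = c * ρ (-(k:ℤ)-1) := by rw [hρ1]; ring
  have hwnorm : ∀ n : ℤ, ‖w n‖ = ρ n := by
    intro n
    rw [← hxn n]
    refine key _ _ ?_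
    rw [hxn n]
    exact lt_of_le_of_lt (hwest n) (by nlinarith [hρpos n])
  -- coefficients
  have hcoef : ∀ e : A, ∃ a0 : ℤ → K, HasSum (fun n => a0 n • ((x ^ n : Aˣ) : A)) e ∧
      ∀ b0 : ℤ → K, HasSum (fun n => b0 n • ((x ^ n : Aˣ) : A)) e → b0 = a0 := by
    intro e
    obtain ⟨a0, h1, h2⟩ := hexp e
    exact ⟨a0, h1, h2⟩
  choose a ha hauniq using hcoef
  have hcoefbound : ∀ (e : A) (n : ℤ), ‖a e n‖ * ρ n ≤ ‖e‖ := by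
    intro e n
    have h := (hnorm e _ (ha e)).1 (Set.mem_range_self n)
    rw [hρdef]
    exact h
  have hsummable : ∀ e : A, Summable (fun n : ℤ => a e n • w n) := by
    intro e
    apply NonarchimedeanAddGroup.summable_of_tendsto_cofinite_zero
    have h1 : Filter.Tendsto (fun n : ℤ => a e n • ((x ^ n : Aˣ) : A)) Filter.cofinite (nhds 0) :=
      (ha e).summable.tendsto_cofinite_zero
    rw [tendsto_zero_iff_norm_tendsto_zero] at h1 ⊢
    have h2 : ∀ n : ℤ, ‖a e n • ((x ^ n : Aˣ) : A)‖ = ‖a e n • w n‖ := by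
      intro n
      rw [norm_smul, norm_smul, hwnorm, hxn]
    exact h1.congr h2
  set φ0 : A → A := fun e => ∑' n, a e n • w n with hφ0def
  have hφx : ∀ n : ℤ, φ0 ((x ^ n : Aˣ) : A) = w n := by
    intro n
    have hδa' : a ((x ^ n : Aˣ) : A) = fun k => if k = n then (1:K) else 0 :=
      (hauniq ((x ^ n : Aˣ) : A) _ (hδ n)).symm
    rw [hφ0def]
    dsimp only
    rw [hδa']
    have hfun : (fun k : ℤ => (if k = n then (1:K) else 0) • w k)
        = fun k : ℤ => if k = n then w n else 0 := by
      funext k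
      by_cases h : k = n
      · subst h; simp
      · simp [h]
    rw [hfun]
    exact tsum_ite_eq n _
  have hφsub : ∀ e : A, ‖φ0 e - e‖ ≤ c * ‖e‖ := by
    intro e
    have h1 : φ0 e - e = ∑' n, (a e n • w n - a e n • ((x ^ n : Aˣ) : A)) := by
      calc φ0 e - e
          = (∑' n, a e n • w n) - ∑' n, a e n • ((x ^ n : Aˣ) : A) := by
            rw [(ha e).tsum_eq]
      _ = ∑' n, (a e n • w n - a e n • ((x ^ n : Aˣ) : A)) :=
            ((hsummable e).tsum_sub (ha e).summable).symm
    rw [h1]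
    refine IsUltrametricDist.norm_tsum_le_of_forall_le_of_nonneg (by positivity) ?_
    intro n
    rw [← smul_sub, norm_smul]
    calc ‖a e n‖ * ‖w n - ((x ^ n : Aˣ) : A)‖ ≤ ‖a e n‖ * (c * ρ n) :=
        mul_le_mul_of_nonneg_left (hwest n) (norm_nonneg _)
    _ = c * (‖a e n‖ * ρ n) := by ring
    _ ≤ c * ‖e‖ := mul_le_mul_of_nonneg_left (hcoefbound e n) hc0.le
  have hφzero : φ0 0 = 0 := by
    have h0 : (fun _ : ℤ => (0:K)) = a 0 := by
      refine hauniq 0 _ ?_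
      simpa using (hasSum_zero : HasSum (fun _ : ℤ => (0:A)) 0)
    rw [hφ0def]
    dsimp only
    rw [← h0]
    simp
  have hφnorm : ∀ e : A, ‖φ0 e‖ = ‖e‖ := by
    intro e
    by_cases he : e = 0
    · rw [he, hφzero]
    · exact key _ _ (lt_of_le_of_lt (hφsub e) (by nlinarith [norm_pos_iff.mpr he]))
  have hφadd : ∀ e f : A, φ0 (e + f) = φ0 e + φ0 f := by
    intro e f
    have h1 : a (e + f) = fun n => a e n + a f n := by
      symm
      refine hauniq _ _ ?_
      have h2 := (ha e).add (ha f)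
      simpa [add_smul] using h2
    rw [hφ0def]
    dsimp only
    rw [h1]
    calc ∑' n, (a e n + a f n) • w n = ∑' n, (a e n • w n + a f n • w n) := by
            simp [add_smul]
    _ = _ := (hsummable e).tsum_add (hsummable f)
  have hφsmul : ∀ (k : K) (e : A), φ0 (k • e) = k • φ0 e := by
    intro k e
    have h1 : a (k • e) = fun n => k * a e n := by
      symm
      refine hauniq _ _ ?_
      have h2 := (ha e).const_smul k
      simpa [smul_smul] using h2
    rw [hφ0def]
    dsimp only
    rw [h1]
    have h3 : ∀ n : ℤ, (k * a e n) • w n = k • (a e n • w n) := by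
      intro n
      rw [mul_smul]
    rw [tsum_congr h3]
    exact ((hsummable e).hasSum.const_smul k).tsum_eq
  set φL : A →ₗ[K] A :=
    { toFun := φ0
      map_add' := hφadd
      map_smul' := hφsmul } with hφLdef
  have hφLapp : ∀ e : A, φL e = φ0 e := fun e => rfl
  set Φ : A →L[K] A := φL.mkContinuous 1 (fun e => by rw [hφLapp, hφnorm, one_mul]) with hΦdef
  have hΦapp : ∀ e : A, Φ e = φ0 e := fun e => rfl
  have hdense : Dense ((Submodule.span K (Set.range fun n : ℤ => ((x ^ n : Aˣ) : A)) :
      Submodule K A) : Set A) := by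
    intro e
    refine mem_closure_of_tendsto (ha e) (Filter.Eventually.of_forall fun s => ?_)
    exact Submodule.sum_mem _ fun n _ => Submodule.smul_mem _ _ (Submodule.subset_span ⟨n, rfl⟩)
  have hΦx : ∀ n : ℤ, Φ ((x ^ n : Aˣ) : A) = w n := by
    intro n
    rw [hΦapp]
    exact hφx n
  have hmul : ∀ e f : A, Φ (e * f) = m (Φ e) (Φ f) := by
    have stage1 : ∀ (k : ℤ) (e : A), Φ (((x ^ k : Aˣ) : A) * e) = m (w k) (Φ e) := by
      intro k
      have hcont1 : Continuous fun e : A => Φ (((x ^ k : Aˣ) : A) * e) :=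
        Φ.continuous.comp (continuous_const.mul continuous_id)
      have hcont2 : Continuous fun e : A => m (w k) (Φ e) :=
        (m (w k)).continuous.comp Φ.continuous
      have heq : (fun e : A => Φ (((x ^ k : Aˣ) : A) * e)) = fun e : A => m (w k) (Φ e) := by
        refine Continuous.ext_on hdense hcont1 hcont2 ?_
        intro e he
        induction he using Submodule.span_induction with
        | mem e' he' =>
            obtain ⟨j, rfl⟩ := he'
            show Φ (((x ^ k : Aˣ) : A) * ((x ^ j : Aˣ) : A)) = m (w k) (Φ ((x ^ j : Aˣ) : A))
            rw [hΦx j, ← Units.val_mul, ← zpow_add, hΦx (k + j), hwadd]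
        | zero =>
            show Φ (((x ^ k : Aˣ) : A) * 0) = m (w k) (Φ 0)
            rw [mul_zero, map_zero, map_zero]
        | add p q hp hq ihp ihq =>
            have ihp' : Φ (((x ^ k : Aˣ) : A) * p) = m (w k) (Φ p) := ihp
            have ihq' : Φ (((x ^ k : Aˣ) : A) * q) = m (w k) (Φ q) := ihq
            show Φ (((x ^ k : Aˣ) : A) * (p + q)) = m (w k) (Φ (p + q))
            simp only [mul_add, map_add, ihp', ihq']
        | smul r p hp ihp =>
            have ihp' : Φ (((x ^ k : Aˣ) : A) * p) = m (w k) (Φ p) := ihp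
            show Φ (((x ^ k : Aˣ) : A) * (r • p)) = m (w k) (Φ (r • p))
            rw [mul_smul_comm, map_smul, map_smul, map_smul, ihp']
      exact fun e => congrFun heq e
    intro e f
    have hcont1 : Continuous fun f : A => Φ (e * f) :=
      Φ.continuous.comp (continuous_const.mul continuous_id)
    have hcont2 : Continuous fun f : A => m (Φ e) (Φ f) :=
      (m (Φ e)).continuous.comp Φ.continuous
    have heq : (fun f : A => Φ (e * f)) = fun f : A => m (Φ e) (Φ f) := by
      refine Continuous.ext_on hdense hcont1 hcont2 ?_
      intro f hf
      induction hf using Submodule.span_induction with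
      | mem f' hf' =>
          obtain ⟨k, rfl⟩ := hf'
          show Φ (e * ((x ^ k : Aˣ) : A)) = m (Φ e) (Φ ((x ^ k : Aˣ) : A))
          rw [hΦx k, mul_comm, stage1 k e, hcomm]
      | zero =>
          show Φ (e * 0) = m (Φ e) (Φ 0)
          rw [mul_zero, map_zero, map_zero]
      | add p q hp hq ihp ihq =>
          have ihp' : Φ (e * p) = m (Φ e) (Φ p) := ihp
          have ihq' : Φ (e * q) = m (Φ e) (Φ q) := ihq
          show Φ (e * (p + q)) = m (Φ e) (Φ (p + q))
          simp only [mul_add, map_add, ihp', ihq']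
      | smul r p hp ihp =>
          have ihp' : Φ (e * p) = m (Φ e) (Φ p) := ihp
          show Φ (e * (r • p)) = m (Φ e) (Φ (r • p))
          rw [mul_smul_comm, map_smul, map_smul, map_smul, ihp']
    exact congrFun heq f
  have hbij : Function.Bijective Φ := by
    constructor
    · intro p q h
      have h2 : Φ (p - q) = 0 := by rw [map_sub, h, sub_self]
      have h3 : ‖p - q‖ = 0 := by
        rw [← hφnorm (p - q), ← hΦapp, h2, norm_zero]
      have h4 : p - q = 0 := norm_eq_zero.mp h3
      linear_combination h4
    · intro b
      obtain ⟨e, he⟩ := inv_lemma Φ (fun e => by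
        rw [norm_sub_rev, hΦapp]
        exact hφsub e) b
      exact ⟨e, he⟩
  refine ⟨φL, ?_, ?_, ?_, ?_⟩
  · exact hbij
  · intro e
    rw [hφLapp]
    exact hφnorm e
  · intro p q
    have h2 := hmul p q
    simpa only [hΦapp, hφLapp] using h2
  · intro e
    rw [hφLapp]
    exact hφsub e
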